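/- Let t ≥ 0, b = 30t+17, a = 30t+19 be twin primes. Then max over n ≥ 2 of (H_a(n) − H_b(n)) is at most 6 if and only if 30t+23, 30t+29, 30t+31 are all prime, i.e. if and only if 30t+17, 30t+19, 30t+23, 30t+29, 30t+31 form a constellation p, p+2, p+6, p+12, p+14 of five consecutive primes. -/

import Mathlib

/-- The H-sequence with starting value `c`: `Hseq c 2 = c` and for `n ≥ 2`,
`Hseq c (n+1)` is the least `m > Hseq c n` with (`m` prime ↔ `n+1` prime). -/
noncomputable def Hseq (c : ℕ) : ℕ → ℕ
  | 0 => c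
  | 1 => c
  | 2 => c
  | n + 3 => sInf {m | Hseq c (n + 2) < m ∧ (Nat.Prime m ↔ Nat.Prime (n + 3))}
/-- A list of primes, strictly increasing, with no other primes in between. -/
def ConsecPrimes (l : List ℕ) : Prop :=
  l.Chain' (· < ·) ∧ (∀ x ∈ l, Nat.Prime x) ∧
    ∀ q, Nat.Prime q → l.headI ≤ q → q ≤ l.getLast! → q ∈ l
lemma H2 (c : ℕ) : Hseq c 2 = c := rfl
lemma H3 (c : ℕ) : Hseq c 3 = sInf {m | c < m ∧ (Nat.Prime m ↔ Nat.Prime 3)} := rfl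
lemma H4 (c : ℕ) : Hseq c 4 = sInf {m | Hseq c 3 < m ∧ (Nat.Prime m ↔ Nat.Prime 4)} := rfl
lemma H5 (c : ℕ) : Hseq c 5 = sInf {m | Hseq c 4 < m ∧ (Nat.Prime m ↔ Nat.Prime 5)} := rfl
lemma H6 (c : ℕ) : Hseq c 6 = sInf {m | Hseq c 5 < m ∧ (Nat.Prime m ↔ Nat.Prime 6)} := rfl
lemma H7 (c : ℕ) : Hseq c 7 = sInf {m | Hseq c 6 < m ∧ (Nat.Prime m ↔ Nat.Prime 7)} := rfl
lemma H8 (c : ℕ) : Hseq c 8 = sInf {m | Hseq c 7 < m ∧ (Nat.Prime m ↔ Nat.Prime 8)} := rfl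
lemma H9 (c : ℕ) : Hseq c 9 = sInf {m | Hseq c 8 < m ∧ (Nat.Prime m ↔ Nat.Prime 9)} := rfl
lemma H10 (c : ℕ) : Hseq c 10 = sInf {m | Hseq c 9 < m ∧ (Nat.Prime m ↔ Nat.Prime 10)} := rfl
lemma H11 (c : ℕ) : Hseq c 11 = sInf {m | Hseq c 10 < m ∧ (Nat.Prime m ↔ Nat.Prime 11)} := rfl
lemma Hstep (c n : ℕ) (h : 2 ≤ n) :
    Hseq c (n+1) = sInf {m | Hseq c n < m ∧ (Nat.Prime m ↔ Nat.Prime (n+1))} := by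
  obtain ⟨k, rfl⟩ : ∃ k, n = k + 2 := ⟨n - 2, by omega⟩
  rfl

lemma step_eq (x y : ℕ) (P : Prop) (hxy : x < y) (hy : Nat.Prime y ↔ P)
    (hmin : ∀ z, x < z → z < y → ¬(Nat.Prime z ↔ P)) :
    sInf {m | x < m ∧ (Nat.Prime m ↔ P)} = y := by
  have hyS : y ∈ {m | x < m ∧ (Nat.Prime m ↔ P)} := ⟨hxy, hy⟩
  have hne : {m | x < m ∧ (Nat.Prime m ↔ P)}.Nonempty := ⟨y, hyS⟩
  have h1 := Nat.sInf_mem hne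
  have h2 := Nat.sInf_le hyS
  rcases lt_or_eq_of_le h2 with h | h
  · exact absurd h1.2 (hmin _ h1.1 h)
  · exact h

lemma step_ge (x Y : ℕ) (P : Prop)
    (hne : {m | x < m ∧ (Nat.Prime m ↔ P)}.Nonempty)
    (hmin : ∀ z, x < z → z < Y → ¬(Nat.Prime z ↔ P)) :
    Y ≤ sInf {m | x < m ∧ (Nat.Prime m ↔ P)} := by
  have h1 := Nat.sInf_mem hne
  by_contra h
  exact hmin _ h1.1 (by omega) h1.2

lemma not_prime_of_dvd (d k : ℕ) (hd : d ∣ k) (h1 : 1 < d) (h2 : d < k) : ¬ k.Prime := by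
  intro hp
  rcases (Nat.Prime.eq_one_or_self_of_dvd hp d hd) with h | h <;> omega

lemma np_mid (t z : ℕ) (hz : z.Prime) (hl : 30*t+17 < z) (hr : z < 30*t+37)
    (e1 : z ≠ 30*t+19) (e2 : z ≠ 30*t+23) (e3 : z ≠ 30*t+29) (e4 : z ≠ 30*t+31) : False := by
  have hc : z = 30*t+18 ∨ z = 30*t+20 ∨ z = 30*t+21 ∨ z = 30*t+22 ∨ z = 30*t+24 ∨
      z = 30*t+25 ∨ z = 30*t+26 ∨ z = 30*t+27 ∨ z = 30*t+28 ∨ z = 30*t+30 ∨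
      z = 30*t+32 ∨ z = 30*t+33 ∨ z = 30*t+34 ∨ z = 30*t+35 ∨ z = 30*t+36 := by omega
  rcases hc with rfl|rfl|rfl|rfl|rfl|rfl|rfl|rfl|rfl|rfl|rfl|rfl|rfl|rfl|rfl
  · exact not_prime_of_dvd 2 _ ⟨15*t+9, by ring⟩ (by norm_num) (by omega) hz
  · exact not_prime_of_dvd 2 _ ⟨15*t+10, by ring⟩ (by norm_num) (by omega) hz
  · exact not_prime_of_dvd 3 _ ⟨10*t+7, by ring⟩ (by norm_num) (by omega) hz
  · exact not_prime_of_dvd 2 _ ⟨15*t+11, by ring⟩ (by norm_num) (by omega) hz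
  · exact not_prime_of_dvd 2 _ ⟨15*t+12, by ring⟩ (by norm_num) (by omega) hz
  · exact not_prime_of_dvd 5 _ ⟨6*t+5, by ring⟩ (by norm_num) (by omega) hz
  · exact not_prime_of_dvd 2 _ ⟨15*t+13, by ring⟩ (by norm_num) (by omega) hz
  · exact not_prime_of_dvd 3 _ ⟨10*t+9, by ring⟩ (by norm_num) (by omega) hz
  · exact not_prime_of_dvd 2 _ ⟨15*t+14, by ring⟩ (by norm_num) (by omega) hz
  · exact not_prime_of_dvd 2 _ ⟨15*t+15, by ring⟩ (by norm_num) (by omega) hz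
  · exact not_prime_of_dvd 2 _ ⟨15*t+16, by ring⟩ (by norm_num) (by omega) hz
  · exact not_prime_of_dvd 3 _ ⟨10*t+11, by ring⟩ (by norm_num) (by omega) hz
  · exact not_prime_of_dvd 2 _ ⟨15*t+17, by ring⟩ (by norm_num) (by omega) hz
  · exact not_prime_of_dvd 5 _ ⟨6*t+7, by ring⟩ (by norm_num) (by omega) hz
  · exact not_prime_of_dvd 2 _ ⟨15*t+18, by ring⟩ (by norm_num) (by omega) hz

section Values
variable (t : ℕ)

lemma vb3 (h19 : Nat.Prime (30*t+19)) : Hseq (30*t+17) 3 = 30*t+19 := by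
  rw [H3]
  refine step_eq _ _ _ (by omega) (iff_of_true h19 (by norm_num)) ?_
  intro z h1 h2 hiff
  exact (np_mid t z (hiff.mpr (by norm_num)) (by omega) (by omega) (by omega) (by omega)
    (by omega) (by omega)).elim

lemma vb4 (h19 : Nat.Prime (30*t+19)) : Hseq (30*t+17) 4 = 30*t+20 := by
  rw [H4, vb3 t h19]
  refine step_eq _ _ _ (by omega) (iff_of_false (fun hp => np_mid t _ hp (by omega) (by omega)
    (by omega) (by omega) (by omega) (by omega)) (by norm_num)) ?_
  intro z h1 h2; omega

lemma vb5 (h19 : Nat.Prime (30*t+19)) (h23 : Nat.Prime (30*t+23)) :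
    Hseq (30*t+17) 5 = 30*t+23 := by
  rw [H5, vb4 t h19]
  refine step_eq _ _ _ (by omega) (iff_of_true h23 (by norm_num)) ?_
  intro z h1 h2 hiff
  exact (np_mid t z (hiff.mpr (by norm_num)) (by omega) (by omega) (by omega) (by omega)
    (by omega) (by omega)).elim

lemma vb6 (h19 : Nat.Prime (30*t+19)) (h23 : Nat.Prime (30*t+23)) :
    Hseq (30*t+17) 6 = 30*t+24 := by
  rw [H6, vb5 t h19 h23]
  refine step_eq _ _ _ (by omega) (iff_of_false (fun hp => np_mid t _ hp (by omega) (by omega)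
    (by omega) (by omega) (by omega) (by omega)) (by norm_num)) ?_
  intro z h1 h2; omega

lemma vb7 (h19 : Nat.Prime (30*t+19)) (h23 : Nat.Prime (30*t+23))
    (h29 : Nat.Prime (30*t+29)) : Hseq (30*t+17) 7 = 30*t+29 := by
  rw [H7, vb6 t h19 h23]
  refine step_eq _ _ _ (by omega) (iff_of_true h29 (by norm_num)) ?_
  intro z h1 h2 hiff
  exact (np_mid t z (hiff.mpr (by norm_num)) (by omega) (by omega) (by omega) (by omega)
    (by omega) (by omega)).elim

lemma vb8 (h19 : Nat.Prime (30*t+19)) (h23 : Nat.Prime (30*t+23))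
    (h29 : Nat.Prime (30*t+29)) : Hseq (30*t+17) 8 = 30*t+30 := by
  rw [H8, vb7 t h19 h23 h29]
  refine step_eq _ _ _ (by omega) (iff_of_false (fun hp => np_mid t _ hp (by omega) (by omega)
    (by omega) (by omega) (by omega) (by omega)) (by norm_num)) ?_
  intro z h1 h2; omega

lemma vb9 (h19 : Nat.Prime (30*t+19)) (h23 : Nat.Prime (30*t+23))
    (h29 : Nat.Prime (30*t+29)) (h31 : Nat.Prime (30*t+31)) :
    Hseq (30*t+17) 9 = 30*t+32 := by
  rw [H9, vb8 t h19 h23 h29]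
  refine step_eq _ _ _ (by omega) (iff_of_false (fun hp => np_mid t _ hp (by omega) (by omega)
    (by omega) (by omega) (by omega) (by omega)) (by norm_num)) ?_
  intro z h1 h2 hiff
  have hz : z = 30*t+31 := by omega
  subst hz
  exact absurd (hiff.mp h31) (by norm_num)

lemma vb10 (h19 : Nat.Prime (30*t+19)) (h23 : Nat.Prime (30*t+23))
    (h29 : Nat.Prime (30*t+29)) (h31 : Nat.Prime (30*t+31)) :
    Hseq (30*t+17) 10 = 30*t+33 := by
  rw [H10, vb9 t h19 h23 h29 h31]
  refine step_eq _ _ _ (by omega) (iff_of_false (fun hp => np_mid t _ hp (by omega) (by omega)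
    (by omega) (by omega) (by omega) (by omega)) (by norm_num)) ?_
  intro z h1 h2; omega

lemma va3 (h23 : Nat.Prime (30*t+23)) : Hseq (30*t+19) 3 = 30*t+23 := by
  rw [H3]
  refine step_eq _ _ _ (by omega) (iff_of_true h23 (by norm_num)) ?_
  intro z h1 h2 hiff
  exact (np_mid t z (hiff.mpr (by norm_num)) (by omega) (by omega) (by omega) (by omega)
    (by omega) (by omega)).elim

lemma va4 (h23 : Nat.Prime (30*t+23)) : Hseq (30*t+19) 4 = 30*t+24 := by
  rw [H4, va3 t h23]
  refine step_eq _ _ _ (by omega) (iff_of_false (fun hp => np_mid t _ hp (by omega) (by omega)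
    (by omega) (by omega) (by omega) (by omega)) (by norm_num)) ?_
  intro z h1 h2; omega

lemma va5 (h23 : Nat.Prime (30*t+23)) (h29 : Nat.Prime (30*t+29)) :
    Hseq (30*t+19) 5 = 30*t+29 := by
  rw [H5, va4 t h23]
  refine step_eq _ _ _ (by omega) (iff_of_true h29 (by norm_num)) ?_
  intro z h1 h2 hiff
  exact (np_mid t z (hiff.mpr (by norm_num)) (by omega) (by omega) (by omega) (by omega)
    (by omega) (by omega)).elim

lemma va6 (h23 : Nat.Prime (30*t+23)) (h29 : Nat.Prime (30*t+29)) :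
    Hseq (30*t+19) 6 = 30*t+30 := by
  rw [H6, va5 t h23 h29]
  refine step_eq _ _ _ (by omega) (iff_of_false (fun hp => np_mid t _ hp (by omega) (by omega)
    (by omega) (by omega) (by omega) (by omega)) (by norm_num)) ?_
  intro z h1 h2; omega

lemma va7 (h23 : Nat.Prime (30*t+23)) (h29 : Nat.Prime (30*t+29))
    (h31 : Nat.Prime (30*t+31)) : Hseq (30*t+19) 7 = 30*t+31 := by
  rw [H7, va6 t h23 h29]
  refine step_eq _ _ _ (by omega) (iff_of_true h31 (by norm_num)) ?_
  intro z h1 h2; omega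

lemma va8 (h23 : Nat.Prime (30*t+23)) (h29 : Nat.Prime (30*t+29))
    (h31 : Nat.Prime (30*t+31)) : Hseq (30*t+19) 8 = 30*t+32 := by
  rw [H8, va7 t h23 h29 h31]
  refine step_eq _ _ _ (by omega) (iff_of_false (fun hp => np_mid t _ hp (by omega) (by omega)
    (by omega) (by omega) (by omega) (by omega)) (by norm_num)) ?_
  intro z h1 h2; omega

lemma va9 (h23 : Nat.Prime (30*t+23)) (h29 : Nat.Prime (30*t+29))
    (h31 : Nat.Prime (30*t+31)) : Hseq (30*t+19) 9 = 30*t+33 := by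
  rw [H9, va8 t h23 h29 h31]
  refine step_eq _ _ _ (by omega) (iff_of_false (fun hp => np_mid t _ hp (by omega) (by omega)
    (by omega) (by omega) (by omega) (by omega)) (by norm_num)) ?_
  intro z h1 h2; omega

lemma va10 (h23 : Nat.Prime (30*t+23)) (h29 : Nat.Prime (30*t+29))
    (h31 : Nat.Prime (30*t+31)) : Hseq (30*t+19) 10 = 30*t+34 := by
  rw [H10, va9 t h23 h29 h31]
  refine step_eq _ _ _ (by omega) (iff_of_false (fun hp => np_mid t _ hp (by omega) (by omega)
    (by omega) (by omega) (by omega) (by omega)) (by norm_num)) ?_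
  intro z h1 h2; omega

lemma prime_nonempty (x : ℕ) (k : ℕ) (hk : Nat.Prime k) :
    {m | x < m ∧ (Nat.Prime m ↔ Nat.Prime k)}.Nonempty := by
  obtain ⟨p, hp1, hp2⟩ := Nat.exists_infinite_primes (x+1)
  exact ⟨p, by omega, iff_of_true hp2 hk⟩

lemma ge_a3 (h23 : ¬ Nat.Prime (30*t+23)) : 30*t+29 ≤ Hseq (30*t+19) 3 := by
  rw [H3]
  refine step_ge _ _ _ (prime_nonempty _ 3 (by norm_num)) ?_
  intro z h1 h2 hiff
  have hz := hiff.mpr (by norm_num)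
  by_cases hc : z = 30*t+23
  · exact h23 (hc ▸ hz)
  · exact np_mid t z hz (by omega) (by omega) (by omega) hc (by omega) (by omega)

lemma ge_a5 (h23 : Nat.Prime (30*t+23)) (h29 : ¬ Nat.Prime (30*t+29)) :
    30*t+31 ≤ Hseq (30*t+19) 5 := by
  rw [H5, va4 t h23]
  refine step_ge _ _ _ (prime_nonempty _ 5 (by norm_num)) ?_
  intro z h1 h2 hiff
  have hz := hiff.mpr (by norm_num)
  by_cases hc : z = 30*t+29
  · exact h29 (hc ▸ hz)
  · exact np_mid t z hz (by omega) (by omega) (by omega) (by omega) hc (by omega)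

lemma ge_a7 (h23 : Nat.Prime (30*t+23)) (h29 : Nat.Prime (30*t+29))
    (h31 : ¬ Nat.Prime (30*t+31)) : 30*t+37 ≤ Hseq (30*t+19) 7 := by
  rw [H7, va6 t h23 h29]
  refine step_ge _ _ _ (prime_nonempty _ 7 (by norm_num)) ?_
  intro z h1 h2 hiff
  have hz := hiff.mpr (by norm_num)
  by_cases hc : z = 30*t+31
  · exact h31 (hc ▸ hz)
  · exact np_mid t z hz (by omega) (by omega) (by omega) (by omega) (by omega) hc

lemma merge (h19 : Nat.Prime (30*t+19)) (h23 : Nat.Prime (30*t+23))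
    (h29 : Nat.Prime (30*t+29)) (h31 : Nat.Prime (30*t+31)) :
    ∀ k, Hseq (30*t+19) (11+k) = Hseq (30*t+17) (11+k) := by
  intro k
  induction k with
  | zero =>
    rw [show 11+0 = 11 by rfl, H11, H11, va10 t h23 h29 h31, vb10 t h19 h23 h29 h31]
    congr 1
    ext m
    simp only [Set.mem_setOf_eq]
    constructor
    · rintro ⟨h, hp⟩; exact ⟨by omega, hp⟩
    · rintro ⟨h, hp⟩
      refine ⟨?_, hp⟩
      have hm := hp.mpr (by norm_num)
      have hne : m ≠ 30*t+34 := by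
        intro he
        exact np_mid t m hm (by omega) (by omega) (by omega) (by omega) (by omega) (by omega)
      omega
  | succ k ih =>
    rw [show 11+(k+1) = (11+k)+1 by omega, Hstep _ (11+k) (by omega),
      Hstep _ (11+k) (by omega), ih]

end Values

theorem stmt8 (t : ℕ) (hb : Nat.Prime (30*t+17)) (ha : Nat.Prime (30*t+19)) :
    ((∀ n, 2 ≤ n → Hseq (30*t+19) n - Hseq (30*t+17) n ≤ 6) ↔
        (Nat.Prime (30*t+23) ∧ Nat.Prime (30*t+29) ∧ Nat.Prime (30*t+31))) ∧
    ((∀ n, 2 ≤ n → Hseq (30*t+19) n - Hseq (30*t+17) n ≤ 6) ↔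
        ConsecPrimes [30*t+17, 30*t+19, 30*t+23, 30*t+29, 30*t+31]) := by
  have key : (∀ n, 2 ≤ n → Hseq (30*t+19) n - Hseq (30*t+17) n ≤ 6) ↔
      (Nat.Prime (30*t+23) ∧ Nat.Prime (30*t+29) ∧ Nat.Prime (30*t+31)) := by
    constructor
    · intro hall
      have h23 : Nat.Prime (30*t+23) := by
        by_contra h23
        have h1 := ge_a3 t h23
        have h2 := vb3 t ha
        have h3 := hall 3 (by norm_num)
        omega
      have h29 : Nat.Prime (30*t+29) := by
        by_contra h29
        have h1 := ge_a5 t h23 h29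
        have h2 := vb5 t ha h23
        have h3 := hall 5 (by norm_num)
        omega
      have h31 : Nat.Prime (30*t+31) := by
        by_contra h31
        have h1 := ge_a7 t h23 h29 h31
        have h2 := vb7 t ha h23 h29
        have h3 := hall 7 (by norm_num)
        omega
      exact ⟨h23, h29, h31⟩
    · rintro ⟨h23, h29, h31⟩ n hn
      by_cases hc : n ≤ 10
      · interval_cases n
        · rw [H2, H2]; omega
        · rw [va3 t h23, vb3 t ha]; omega
        · rw [va4 t h23, vb4 t ha]; omega
        · rw [va5 t h23 h29, vb5 t ha h23]; omega
        · rw [va6 t h23 h29, vb6 t ha h23]; omega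
        · rw [va7 t h23 h29 h31, vb7 t ha h23 h29]; omega
        · rw [va8 t h23 h29 h31, vb8 t ha h23 h29]; omega
        · rw [va9 t h23 h29 h31, vb9 t ha h23 h29 h31]; omega
        · rw [va10 t h23 h29 h31, vb10 t ha h23 h29 h31]; omega
      · obtain ⟨k, rfl⟩ : ∃ k, n = 11 + k := ⟨n - 11, by omega⟩
        rw [merge t ha h23 h29 h31 k]
        omega
  have second : (Nat.Prime (30*t+23) ∧ Nat.Prime (30*t+29) ∧ Nat.Prime (30*t+31)) ↔
      ConsecPrimes [30*t+17, 30*t+19, 30*t+23, 30*t+29, 30*t+31] := by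
    constructor
    · rintro ⟨h23, h29, h31⟩
      refine ⟨?_, ?_, ?_⟩
      · simp [List.Chain', List.isChain_cons_cons]
      · intro x hx
        simp only [List.mem_cons, List.not_mem_nil, or_false] at hx
        rcases hx with rfl|rfl|rfl|rfl|rfl <;> assumption
      · intro q hq hq1 hq2
        simp only [List.headI] at hq1
        have hlast : ([30*t+17, 30*t+19, 30*t+23, 30*t+29, 30*t+31] : List ℕ).getLast! =
            30*t+31 := rfl
        rw [hlast] at hq2
        by_contra hmem
        simp only [List.mem_cons, List.not_mem_nil, or_false, not_or] at hmem
        obtain ⟨e1, e2, e3, e4, e5⟩ := hmem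
        exact np_mid t q hq (by omega) (by omega) e2 e3 e4 e5
    · intro h
      exact ⟨h.2.1 _ (by simp), h.2.1 _ (by simp), h.2.1 _ (by simp)⟩
  exact ⟨key, key.trans second⟩
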